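/- Every independent set of the Shelah–Soifer graph is either not Lebesgue measurable or has Lebesgue measure zero; equivalently, no independent set of the Shelah–Soifer graph is a Lebesgue measurable subset of ℝ of positive measure. -/

import Mathlib

open MeasureTheory Pointwise

/-- The Shelah–Soifer graph on `ℝ`: `x` and `y` are adjacent iff
`x - y ∈ (ℚ + √2) ∪ (ℚ + (-√2))`. -/
noncomputable def ShelahSoiferGraph : SimpleGraph ℝ where
  Adj x y := (∃ q : ℚ, x - y = q + Real.sqrt 2) ∨ (∃ q : ℚ, x - y = q - Real.sqrt 2)
  symm := by
    constructor
    rintro x y (⟨q, hq⟩ | ⟨q, hq⟩)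
    · exact Or.inr ⟨-q, by push_cast; linarith⟩
    · exact Or.inl ⟨-q, by push_cast; linarith⟩
  loopless := by
    constructor
    rintro x (⟨q, hq⟩ | ⟨q, hq⟩)
    · exact irrational_sqrt_two ⟨-q, by push_cast; linarith⟩
    · exact irrational_sqrt_two ⟨q, by push_cast; linarith⟩

/-- `S` is an independent set of `G`: no two of its vertices are adjacent. -/
def IsIndepSet {V : Type*} (G : SimpleGraph V) (S : Set V) : Prop :=
  ∀ x ∈ S, ∀ y ∈ S, ¬ G.Adj x y

/-- Every independent set of the Shelah–Soifer graph is either not Lebesgue measurable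
or has Lebesgue measure zero: no independent set is a measurable set of positive measure. -/
theorem shelahSoifer_indep_not_measurable_or_null (S : Set ℝ)
    (hS : IsIndepSet ShelahSoiferGraph S) (hmeas : MeasurableSet S) :
    volume S = 0 := by
  by_contra h
  have hpos : 0 < volume S := pos_iff_ne_zero.mpr h
  have hnhds : S - S ∈ nhds (0 : ℝ) :=
    MeasureTheory.Measure.sub_mem_nhds_zero_of_addHaar_pos volume S hmeas hpos
  obtain ⟨ε, hε, hball⟩ := Metric.mem_nhds_iff.mp hnhds
  obtain ⟨q, hq1, hq2⟩ := exists_rat_btwn (show -Real.sqrt 2 < -Real.sqrt 2 + ε by linarith)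
  have hmem : ((q : ℝ) + Real.sqrt 2) ∈ S - S := by
    apply hball
    simp only [Metric.mem_ball, Real.dist_eq, sub_zero]
    rw [abs_lt]
    constructor <;> [linarith [hε]; linarith]
  obtain ⟨x, hx, y, hy, hxy⟩ := hmem
  exact hS x hx y hy (Or.inl ⟨q, by simpa using hxy⟩)
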